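/- Let 0 ≤ α < β with β - α > 1, let λ ∈ ℝ, and define Q(u) = q_{α,β}(u)·q_{α,β}(λ - u), where q_{α,β} is as below. Then Q is increasing on (λ/2, ∞) and decreasing on (-∞, λ/2). -/

import Mathlib

noncomputable def q (α β u : ℝ) : ℝ :=
  if u = 0 then β - α else (Real.exp (-α * u) - Real.exp (-β * u)) / (1 - Real.exp (-u))

open Real Set Filter

/-- `sinh` is strictly convex on `[0, ∞)`. -/
lemma my_strictConvexOn_sinh : StrictConvexOn ℝ (Set.Ici (0:ℝ)) Real.sinh := by
  apply strictConvexOn_of_deriv2_pos (convex_Ici 0) Real.continuous_sinh.continuousOn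
  intro x hx
  rw [interior_Ici] at hx
  have h2 : deriv^[2] Real.sinh = Real.sinh := by
    funext y
    simp [Function.iterate_succ_apply', Real.deriv_sinh, Real.deriv_cosh]
  rw [h2]
  exact Real.sinh_pos_iff.mpr hx

/-- For `0 < s < t` and `x > 0`, `t * sinh (s*x) < s * sinh (t*x)`. -/
lemma key_sinh {s t x : ℝ} (hs : 0 < s) (hst : s < t) (hx : 0 < x) :
    t * Real.sinh (s * x) < s * Real.sinh (t * x) := by
  have ht : (0:ℝ) < t := hs.trans hst
  have hmem1 : t * x ∈ Set.Ici (0:ℝ) := le_of_lt (mul_pos ht hx)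
  have hmem2 : (0:ℝ) ∈ Set.Ici (0:ℝ) := Set.self_mem_Ici
  have hne : t * x ≠ 0 := ne_of_gt (mul_pos ht hx)
  have ha : (0:ℝ) < s / t := by positivity
  have hb : (0:ℝ) < 1 - s / t := by
    rw [sub_pos, div_lt_one ht]; exact hst
  have h := my_strictConvexOn_sinh.2 hmem1 hmem2 hne ha hb (by ring)
  have harg : (s/t) • (t*x) + (1 - s/t) • (0:ℝ) = s * x := by
    simp only [smul_eq_mul, mul_zero, add_zero]
    field_simp
  rw [harg] at h
  simp only [smul_eq_mul, Real.sinh_zero, mul_zero, add_zero] at h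
  have h3 := mul_lt_mul_of_pos_left h ht
  have h4 : t * (s / t * Real.sinh (t * x)) = s * Real.sinh (t * x) := by
    field_simp
  linarith

noncomputable def phj (g x : ℝ) : ℝ :=
  g * Real.cosh (g * x) / Real.sinh (g * x) - Real.cosh x / Real.sinh x

lemma phj_neg (g x : ℝ) : phj g (-x) = -phj g x := by
  simp only [phj, mul_neg, Real.sinh_neg, Real.cosh_neg, div_neg]
  ring

lemma phj_pos {g x : ℝ} (hg : 1 < g) (hx : 0 < x) : 0 < phj g x := by
  have hg0 : (0:ℝ) < g := lt_trans one_pos hg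
  have hsx : 0 < Real.sinh x := Real.sinh_pos_iff.mpr hx
  have hsgx : 0 < Real.sinh (g * x) := Real.sinh_pos_iff.mpr (mul_pos hg0 hx)
  rw [phj, sub_pos, div_lt_div_iff₀ hsx hsgx]
  have key := key_sinh (s := g - 1) (t := g + 1) (by linarith) (by linarith) hx
  have e1 : Real.sinh ((g+1)*x) = Real.sinh (g*x) * Real.cosh x + Real.cosh (g*x) * Real.sinh x := by
    rw [show (g+1)*x = g*x + x by ring, Real.sinh_add]
  have e2 : Real.sinh ((g-1)*x) = Real.sinh (g*x) * Real.cosh x - Real.cosh (g*x) * Real.sinh x := by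
    rw [show (g-1)*x = g*x - x by ring, Real.sinh_sub]
  rw [e1, e2] at key
  nlinarith [key]

lemma hasDerivAt_phj {g x : ℝ} (hg : 0 < g) (hx : x ≠ 0) :
    HasDerivAt (phj g) (1 / Real.sinh x ^ 2 - g ^ 2 / Real.sinh (g * x) ^ 2) x := by
  have hs : Real.sinh x ≠ 0 := Real.sinh_ne_zero.2 hx
  have hsg : Real.sinh (g * x) ≠ 0 := Real.sinh_ne_zero.2 (mul_ne_zero hg.ne' hx)
  have hinner : HasDerivAt (fun y : ℝ => g * y) g x := by
    simpa using (hasDerivAt_id x).const_mul g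
  have hc : HasDerivAt (fun y => Real.cosh (g * y)) (Real.sinh (g * x) * g) x :=
    (Real.hasDerivAt_cosh (g * x)).comp x hinner
  have hs' : HasDerivAt (fun y => Real.sinh (g * y)) (Real.cosh (g * x) * g) x :=
    (Real.hasDerivAt_sinh (g * x)).comp x hinner
  have h1 : HasDerivAt (fun y => g * Real.cosh (g * y) / Real.sinh (g * y))
      ((g * (Real.sinh (g*x) * g) * Real.sinh (g*x) - g * Real.cosh (g*x) * (Real.cosh (g*x) * g)) /
        Real.sinh (g*x) ^ 2) x := (hc.const_mul g).div hs' hsg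
  have h2 : HasDerivAt (fun y => Real.cosh y / Real.sinh y)
      ((Real.sinh x * Real.sinh x - Real.cosh x * Real.cosh x) / Real.sinh x ^ 2) x :=
    (Real.hasDerivAt_cosh x).div (Real.hasDerivAt_sinh x) hs
  have h3 := h1.sub h2
  have i1 : Real.cosh (g*x) ^ 2 - Real.sinh (g*x) ^ 2 = 1 := Real.cosh_sq_sub_sinh_sq (g*x)
  have i2 : Real.cosh x ^ 2 - Real.sinh x ^ 2 = 1 := Real.cosh_sq_sub_sinh_sq x
  have n1 : g * (Real.sinh (g*x) * g) * Real.sinh (g*x) - g * Real.cosh (g*x) * (Real.cosh (g*x) * g)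
      = -(g^2) := by linear_combination (-(g^2)) * i1
  have n2 : Real.sinh x * Real.sinh x - Real.cosh x * Real.cosh x = -1 := by
    linear_combination (-1 : ℝ) * i2
  refine h3.congr_deriv ?_
  rw [n1, n2]
  field_simp
  ring

lemma phj_strictMonoOn {g : ℝ} (hg : 1 < g) : StrictMonoOn (phj g) (Set.Ioi (0:ℝ)) := by
  have hg0 : (0:ℝ) < g := lt_trans one_pos hg
  apply strictMonoOn_of_deriv_pos (convex_Ioi 0)
  · intro x hx
    exact (hasDerivAt_phj hg0 (ne_of_gt hx)).continuousAt.continuousWithinAt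
  · intro x hx
    rw [interior_Ioi] at hx
    rw [(hasDerivAt_phj hg0 (ne_of_gt hx)).deriv]
    have hsx := Real.sinh_pos_iff.mpr hx
    have hsgx := Real.sinh_pos_iff.mpr (mul_pos hg0 hx)
    have key := key_sinh one_pos hg hx
    simp only [one_mul] at key
    rw [sub_pos, div_lt_div_iff₀ (pow_pos hsgx 2) (pow_pos hsx 2)]
    have hfac := mul_pos (sub_pos.2 key) (add_pos hsgx (mul_pos hg0 hsx))
    nlinarith [hfac]

lemma phj_lt {g : ℝ} (hg : 1 < g) {w u : ℝ} (hw : w ≠ 0) (hu : u ≠ 0) (hwu : w < u) :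
    phj g w < phj g u := by
  have mono := phj_strictMonoOn hg
  have e : ∀ y : ℝ, phj g y = -phj g (-y) := by
    intro y; rw [phj_neg, neg_neg]
  rcases lt_trichotomy w 0 with h | h | h
  · rcases lt_trichotomy u 0 with h2 | h2 | h2
    · have hm := mono (show -u ∈ Set.Ioi (0:ℝ) by simp; linarith)
        (show -w ∈ Set.Ioi (0:ℝ) by simp; linarith) (by linarith)
      rw [e w, e u]
      linarith
    · exact absurd h2 hu
    · have p1 := phj_pos hg (show 0 < -w by linarith)
      have p2 := phj_pos hg h2
      rw [e w]
      linarith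
  · exact absurd h hw
  · exact mono (Set.mem_Ioi.2 h) (Set.mem_Ioi.2 (h.trans hwu)) hwu

lemma q_pos {α β : ℝ} (hαβ : α < β) (u : ℝ) : 0 < q α β u := by
  unfold q; split_ifs with h
  · linarith
  · rcases lt_or_gt_of_ne h with hu | hu
    · apply div_pos_of_neg_of_neg
      · have : Real.exp (-α * u) < Real.exp (-β * u) := Real.exp_lt_exp.mpr (by nlinarith)
        linarith
      · have : (1:ℝ) < Real.exp (-u) := Real.one_lt_exp_iff.mpr (by linarith)
        linarith
    · apply div_pos
      · have : Real.exp (-β * u) < Real.exp (-α * u) := Real.exp_lt_exp.mpr (by nlinarith)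
        linarith
      · have : Real.exp (-u) < 1 := by
          rw [Real.exp_lt_one_iff]; linarith
        linarith

lemma q_eq {α β : ℝ} (u : ℝ) (hu : u ≠ 0) :
    q α β u = Real.exp (-((α+β-1)/2) * u) * Real.sinh ((β-α)*(u/2)) / Real.sinh (u/2) := by
  have hu2 : u / 2 ≠ 0 := div_ne_zero hu two_ne_zero
  have hS2 : Real.sinh (u/2) ≠ 0 := Real.sinh_ne_zero.2 hu2
  have e1 : Real.exp (-α * u)
      = Real.exp (-((α+β-1)/2) * u) * Real.exp ((β-α)*(u/2)) * Real.exp (-(u/2)) := by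
    rw [← Real.exp_add, ← Real.exp_add]; congr 1; ring
  have e2 : Real.exp (-β * u)
      = Real.exp (-((α+β-1)/2) * u) * Real.exp (-((β-α)*(u/2))) * Real.exp (-(u/2)) := by
    rw [← Real.exp_add, ← Real.exp_add]; congr 1; ring
  have e3 : Real.exp (-u) = Real.exp (-(u/2)) * Real.exp (-(u/2)) := by
    rw [← Real.exp_add]; congr 1; ring
  have hy : Real.exp (u/2) ≠ 0 := (Real.exp_pos _).ne'
  have hx : Real.exp ((β-α)*(u/2)) ≠ 0 := (Real.exp_pos _).ne'
  have hc : Real.exp (-((α+β-1)/2) * u) ≠ 0 := (Real.exp_pos _).ne'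
  have hY : Real.exp (u/2) - Real.exp (-(u/2)) ≠ 0 := by
    intro hcon
    apply hu
    have : Real.exp (u/2) = Real.exp (-(u/2)) := by linarith
    have := Real.exp_eq_exp.mp this
    linarith
  have hD : 1 - Real.exp (-u) ≠ 0 := by
    intro hcon
    apply hu
    have : Real.exp (-u) = 1 := by linarith
    have := (Real.exp_eq_one_iff _).mp this
    linarith
  rw [q, if_neg hu, div_eq_div_iff hD hS2]
  rw [Real.sinh_eq, Real.sinh_eq, e1, e2, e3, Real.exp_neg ((β-α)*(u/2)), Real.exp_neg (u/2)]
  field_simp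

lemma hasDerivAt_q {α β : ℝ} (hαβ : α < β) {u : ℝ} (hu : u ≠ 0) :
    HasDerivAt (q α β) (q α β u * (-((α+β-1)/2) + phj (β-α) (u/2) / 2)) u := by
  have hg : (0:ℝ) < β - α := by linarith
  have hu2 : u / 2 ≠ 0 := div_ne_zero hu two_ne_zero
  have hs : Real.sinh (u/2) ≠ 0 := Real.sinh_ne_zero.2 hu2
  have hsg : Real.sinh ((β-α)*(u/2)) ≠ 0 := Real.sinh_ne_zero.2 (mul_ne_zero hg.ne' hu2)
  have hE : HasDerivAt (fun v : ℝ => Real.exp (-((α+β-1)/2) * v))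
      (Real.exp (-((α+β-1)/2) * u) * -((α+β-1)/2)) u := by
    have hin : HasDerivAt (fun v : ℝ => -((α+β-1)/2) * v) (-((α+β-1)/2)) u := by
      simpa using (hasDerivAt_id u).const_mul (-((α+β-1)/2))
    exact (Real.hasDerivAt_exp _).comp u hin
  have hA : HasDerivAt (fun v : ℝ => Real.sinh ((β-α)*(v/2)))
      (Real.cosh ((β-α)*(u/2)) * ((β-α)/2)) u := by
    have hin : HasDerivAt (fun v : ℝ => (β-α)*(v/2)) ((β-α)/2) u := by
      have := ((hasDerivAt_id u).div_const 2).const_mul (β-α)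
      exact this.congr_deriv (by ring)
    exact (Real.hasDerivAt_sinh _).comp u hin
  have hB : HasDerivAt (fun v : ℝ => Real.sinh (v/2)) (Real.cosh (u/2) * (1/2)) u := by
    have hin : HasDerivAt (fun v : ℝ => v/2) (1/2) u := by
      simpa using (hasDerivAt_id u).div_const 2
    exact (Real.hasDerivAt_sinh _).comp u hin
  have hS := (hE.mul hA).div hB hs
  have heq : q α β =ᶠ[nhds u]
      (fun v => Real.exp (-((α+β-1)/2) * v) * Real.sinh ((β-α)*(v/2)) / Real.sinh (v/2)) := by
    filter_upwards [isOpen_compl_singleton.mem_nhds hu] with v hv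
    exact q_eq v hv
  have hq := hS.congr_of_eventuallyEq heq
  refine hq.congr_deriv ?_
  rw [q_eq u hu, phj]
  simp only [Pi.mul_apply]
  field_simp
  ring

lemma q_continuous (α β : ℝ) : Continuous (q α β) := by
  rw [continuous_iff_continuousAt]
  intro v
  by_cases hv : v = 0
  · subst hv
    have hN : HasDerivAt (fun u : ℝ => Real.exp (-α * u) - Real.exp (-β * u)) (β - α) 0 := by
      have h1 : HasDerivAt (fun u : ℝ => Real.exp (-α * u)) (-α) 0 := by
        have hin : HasDerivAt (fun u : ℝ => -α * u) (-α) 0 := by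
          simpa using (hasDerivAt_id (0:ℝ)).const_mul (-α)
        exact ((Real.hasDerivAt_exp _).comp 0 hin).congr_deriv (by simp)
      have h2 : HasDerivAt (fun u : ℝ => Real.exp (-β * u)) (-β) 0 := by
        have hin : HasDerivAt (fun u : ℝ => -β * u) (-β) 0 := by
          simpa using (hasDerivAt_id (0:ℝ)).const_mul (-β)
        exact ((Real.hasDerivAt_exp _).comp 0 hin).congr_deriv (by simp)
      have := h1.sub h2
      exact this.congr_deriv (by ring)
    have hD : HasDerivAt (fun u : ℝ => 1 - Real.exp (-u)) 1 0 := by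
      have h3 : HasDerivAt (fun u : ℝ => Real.exp (-u)) (-1) 0 := by
        have hin : HasDerivAt (fun u : ℝ => -u) (-1) 0 := by
          exact hasDerivAt_neg (x := 0)
        exact ((Real.hasDerivAt_exp _).comp 0 hin).congr_deriv (by simp)
      have := h3.const_sub 1
      simpa using this
    have tN := hasDerivAt_iff_tendsto_slope.mp hN
    have tD := hasDerivAt_iff_tendsto_slope.mp hD
    have tQ := tN.div tD one_ne_zero
    rw [ContinuousAt]
    have h0 : q α β 0 = β - α := by simp [q]
    rw [h0, ← nhdsNE_sup_pure (0:ℝ), tendsto_sup]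
    constructor
    · have : (β - α) / 1 = β - α := by ring
      rw [← this]
      apply tQ.congr'
      filter_upwards [self_mem_nhdsWithin] with u hu
      have hu0 : u ≠ 0 := hu
      have eN : slope (fun u : ℝ => Real.exp (-α * u) - Real.exp (-β * u)) 0 u
          = (Real.exp (-α * u) - Real.exp (-β * u)) / u := by
        simp [slope_def_field]
      have eD : slope (fun u : ℝ => 1 - Real.exp (-u)) 0 u = (1 - Real.exp (-u)) / u := by
        simp [slope_def_field]
      simp only [Pi.div_apply]
      rw [eN, eD, div_div_div_cancel_right₀ hu0, q, if_neg hu0]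
    · rw [← h0]
      exact tendsto_pure_nhds _ _
  · have hD : 1 - Real.exp (-v) ≠ 0 := by
      intro hcon
      apply hv
      have : Real.exp (-v) = 1 := by linarith
      have := (Real.exp_eq_one_iff _).mp this
      linarith
    have hcont : ContinuousAt
        (fun u : ℝ => (Real.exp (-α * u) - Real.exp (-β * u)) / (1 - Real.exp (-u))) v := by
      apply ContinuousAt.div
      · fun_prop
      · fun_prop
      · exact hD
    apply hcont.congr
    filter_upwards [isOpen_compl_singleton.mem_nhds hv] with w hw
    simp only [q]
    rw [if_neg (show ¬ w = 0 by simpa using hw)]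

lemma mono_aux0 {f : ℝ → ℝ} {a b : ℝ} (hab : a < b) (hc : ContinuousOn f (Set.Icc a b))
    (hd : ∀ x ∈ Set.Ioo a b, 0 < deriv f x) : f a < f b :=
  strictMonoOn_of_deriv_pos (convex_Icc a b) hc (by rwa [interior_Icc])
    (Set.left_mem_Icc.2 hab.le) (Set.right_mem_Icc.2 hab.le) hab

lemma mono_aux1 {f : ℝ → ℝ} {p a b : ℝ} (hab : a < b) (hc : ContinuousOn f (Set.Icc a b))
    (hd : ∀ x ∈ Set.Ioo a b, x ≠ p → 0 < deriv f x) : f a < f b := by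
  by_cases hp : p ∈ Set.Ioo a b
  · have h1 : f a < f p := mono_aux0 hp.1 (hc.mono (Set.Icc_subset_Icc le_rfl hp.2.le))
      (fun x hx => hd x ⟨hx.1, hx.2.trans hp.2⟩ hx.2.ne)
    have h2 : f p < f b := mono_aux0 hp.2 (hc.mono (Set.Icc_subset_Icc hp.1.le le_rfl))
      (fun x hx => hd x ⟨hp.1.trans hx.1, hx.2⟩ hx.1.ne')
    linarith
  · exact mono_aux0 hab hc (fun x hx => hd x hx (fun h => hp (h ▸ hx)))

lemma mono_aux2 {f : ℝ → ℝ} {p r a b : ℝ} (hab : a < b) (hc : ContinuousOn f (Set.Icc a b))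
    (hd : ∀ x ∈ Set.Ioo a b, x ≠ p → x ≠ r → 0 < deriv f x) : f a < f b := by
  by_cases hr : r ∈ Set.Ioo a b
  · have h1 : f a < f r := mono_aux1 hr.1 (hc.mono (Set.Icc_subset_Icc le_rfl hr.2.le))
      (fun x hx hxp => hd x ⟨hx.1, hx.2.trans hr.2⟩ hxp hx.2.ne)
    have h2 : f r < f b := mono_aux1 hr.2 (hc.mono (Set.Icc_subset_Icc hr.1.le le_rfl))
      (fun x hx hxp => hd x ⟨hr.1.trans hx.1, hx.2⟩ hxp hx.1.ne')
    linarith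
  · exact mono_aux1 hab hc (fun x hx hxp => hd x hx hxp (fun h => hr (h ▸ hx)))

theorem Q_monotonicity_gt_one (α β lam : ℝ) (hα : 0 ≤ α) (hαβ : α < β) (h1 : 1 < β - α) :
    StrictMonoOn (fun u => q α β u * q α β (lam - u)) (Set.Ioi (lam / 2)) ∧
    StrictAntiOn (fun u => q α β u * q α β (lam - u)) (Set.Iio (lam / 2)) := by
  have hΦcont : Continuous (fun u => q α β u * q α β (lam - u)) :=
    (q_continuous α β).mul ((q_continuous α β).comp (continuous_const.sub continuous_id))
  have hderiv : ∀ z : ℝ, z ≠ 0 → z ≠ lam → lam / 2 < z →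
      0 < deriv (fun u => q α β u * q α β (lam - u)) z := by
    intro z hz0 hzl hzhalf
    have hw0 : lam - z ≠ 0 := fun h => hzl (by linarith)
    have h1q := hasDerivAt_q hαβ hz0
    have h2q := hasDerivAt_q hαβ hw0
    have hl : HasDerivAt (fun u : ℝ => lam - u) (-1) z := by
      simpa using (hasDerivAt_id z).const_sub lam
    have h2' : HasDerivAt (fun u : ℝ => q α β (lam - u))
        (q α β (lam - z) * (-((α+β-1)/2) + phj (β-α) ((lam - z)/2) / 2) * (-1)) z :=
      h2q.comp z hl
    have hΦ := h1q.mul h2'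
    rw [show deriv (fun u => q α β u * q α β (lam - u)) z = _ from hΦ.deriv]
    have hphj : phj (β-α) ((lam - z)/2) < phj (β-α) (z/2) := by
      apply phj_lt h1 (div_ne_zero hw0 two_ne_zero) (div_ne_zero hz0 two_ne_zero)
      linarith
    have q1 : 0 < q α β z := q_pos hαβ z
    have q2 : 0 < q α β (lam - z) := q_pos hαβ (lam - z)
    have e : q α β z * (-((α+β-1)/2) + phj (β-α) (z/2) / 2) * q α β (lam - z)
        + q α β z * (q α β (lam - z) * (-((α+β-1)/2) + phj (β-α) ((lam - z)/2) / 2) * (-1))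
        = q α β z * q α β (lam - z) * ((phj (β-α) (z/2) - phj (β-α) ((lam - z)/2)) / 2) := by
      ring
    rw [e]
    apply mul_pos (mul_pos q1 q2)
    linarith
  have hM : StrictMonoOn (fun u => q α β u * q α β (lam - u)) (Set.Ioi (lam / 2)) := by
    intro x hx y hy hxy
    apply mono_aux2 (p := (0:ℝ)) (r := lam) hxy (hΦcont.continuousOn)
    intro z hz hz0 hzl
    apply hderiv z hz0 hzl
    exact lt_trans (Set.mem_Ioi.1 hx) hz.1
  refine ⟨hM, ?_⟩
  intro x hx y hy hxy
  have hx' : lam - y ∈ Set.Ioi (lam / 2) := by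
    simp only [Set.mem_Ioi]; have := Set.mem_Iio.1 hy; linarith
  have hy' : lam - x ∈ Set.Ioi (lam / 2) := by
    simp only [Set.mem_Ioi]; have := Set.mem_Iio.1 hx; linarith
  have := hM hx' hy' (by linarith)
  simp only [sub_sub_cancel] at this
  dsimp only
  calc q α β y * q α β (lam - y) = q α β (lam - y) * q α β y := by ring
    _ < q α β (lam - x) * q α β x := this
    _ = q α β x * q α β (lam - x) := by ring
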